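/- Let 0 < a < 1 and α > 1. For 3/4 < t < 1 and 0 < x_n with x_n² < 1-t, define I₂ = ∫_0^{1-t} s^{-α} exp(-x_n²/(4s)) ds. Then there exists c > 1 depending only on α such that c^{-1} x_n^{2-2α} ≤ I₂ ≤ c x_n^{2-2α}. -/

import Mathlib

open Real intervalIntegral
open MeasureTheory

private lemma exp_neg_le_fact_div_pow (n : ℕ) {u : ℝ} (hu : 0 < u) :
    Real.exp (-u) ≤ (n.factorial : ℝ) / u ^ n := by
  rw [le_div_iff₀ (pow_pos hu n), Real.exp_neg, inv_mul_le_iff₀ (Real.exp_pos u)]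
  have h := Real.pow_div_factorial_le_exp u hu.le n
  rw [div_le_iff₀ (by positivity : (0:ℝ) < (n.factorial : ℝ))] at h
  linarith

theorem stmt_13 (a α : ℝ) (ha0 : 0 < a) (ha1 : a < 1) (hα : 1 < α) :
    ∃ c : ℝ, 1 < c ∧ ∀ t xn : ℝ, 3/4 < t → t < 1 → 0 < xn → xn ^ 2 < 1 - t →
      c⁻¹ * xn ^ (2 - 2 * α) ≤
        (∫ s in (0:ℝ)..(1 - t), s ^ (-α) * Real.exp (-xn ^ 2 / (4 * s))) ∧
      (∫ s in (0:ℝ)..(1 - t), s ^ (-α) * Real.exp (-xn ^ 2 / (4 * s))) ≤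
        c * xn ^ (2 - 2 * α) := by
  classical
  set n : ℕ := ⌈α⌉₊ with hn_def
  have hnα : α ≤ (n : ℝ) := Nat.le_ceil α
  have hn1 : (0:ℝ) < (n : ℝ) - α + 1 := by linarith
  have hfact : (0:ℝ) < (n.factorial : ℝ) := by positivity
  set A : ℝ := (n.factorial : ℝ) * 4 ^ n / ((n : ℝ) - α + 1) with hA_def
  have hApos : 0 < A := by positivity
  have hexp : (0:ℝ) < Real.exp (1/2) := Real.exp_pos _
  refine ⟨2 * Real.exp (1/2) + A + 1/(α-1), ?_, ?_⟩
  · have h1 : (1:ℝ) ≤ Real.exp (1/2) := Real.one_le_exp (by norm_num)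
    have h2 : (0:ℝ) < 1/(α-1) := one_div_pos.mpr (by linarith)
    nlinarith
  intro t xn ht3 ht1 hx hx2
  set c : ℝ := 2 * Real.exp (1/2) + A + 1/(α-1) with hc_def
  have h2exp : (0:ℝ) < 2 * Real.exp (1/2) := by positivity
  have h1inv : (0:ℝ) < 1/(α-1) := one_div_pos.mpr (by linarith)
  have hcpos : 0 < c := by positivity
  set X : ℝ := xn ^ 2 with hX_def
  have hX : 0 < X := by positivity
  have hT : 0 < 1 - t := by linarith
  set f : ℝ → ℝ := fun s => s ^ (-α) * Real.exp (-xn ^ 2 / (4 * s)) with hf_def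
  -- basic rpow facts
  have hxr : ∀ r : ℝ, X ^ r = xn ^ (2 * r) := by
    intro r
    rw [hX_def, ← Real.rpow_natCast xn 2, ← Real.rpow_mul hx.le]
    norm_num
  have hxpos : ∀ r : ℝ, 0 < xn ^ r := fun r => Real.rpow_pos_of_pos hx r
  -- pointwise crude bound on (0, ∞)
  have hbound : ∀ s : ℝ, 0 < s →
      f s ≤ ((n.factorial : ℝ) * 4 ^ n / X ^ ((n:ℝ))) * s ^ ((n:ℝ) - α) := by
    intro s hs
    have hu : 0 < X / (4 * s) := by positivity
    have h1 : Real.exp (-X / (4 * s)) ≤ (n.factorial : ℝ) / (X / (4 * s)) ^ n := by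
      rw [neg_div]
      exact exp_neg_le_fact_div_pow n hu
    have h2 : ((X / (4 * s)) ^ n : ℝ) = X ^ ((n:ℝ)) / ((4:ℝ) ^ n * s ^ ((n:ℝ))) := by
      rw [div_pow, mul_pow, ← Real.rpow_natCast X n, ← Real.rpow_natCast s n]
    have hXn : 0 < X ^ ((n:ℝ)) := Real.rpow_pos_of_pos hX _
    have hsn : 0 < s ^ ((n:ℝ)) := Real.rpow_pos_of_pos hs _
    have h3 : Real.exp (-X / (4 * s)) ≤
        (n.factorial : ℝ) * 4 ^ n * s ^ ((n:ℝ)) / X ^ ((n:ℝ)) := by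
      rw [h2] at h1
      calc Real.exp (-X / (4 * s)) ≤ (n.factorial:ℝ) / (X ^ ((n:ℝ)) / ((4:ℝ)^n * s ^ ((n:ℝ)))) := h1
        _ = (n.factorial : ℝ) * 4 ^ n * s ^ ((n:ℝ)) / X ^ ((n:ℝ)) := by
            field_simp
    have hsa : (0:ℝ) ≤ s ^ (-α) := Real.rpow_nonneg hs.le _
    have : f s ≤ s ^ (-α) * ((n.factorial : ℝ) * 4 ^ n * s ^ ((n:ℝ)) / X ^ ((n:ℝ))) :=
      mul_le_mul_of_nonneg_left h3 hsa
    calc f s ≤ s ^ (-α) * ((n.factorial : ℝ) * 4 ^ n * s ^ ((n:ℝ)) / X ^ ((n:ℝ))) := this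
      _ = ((n.factorial : ℝ) * 4 ^ n / X ^ ((n:ℝ))) * (s ^ (-α) * s ^ ((n:ℝ))) := by ring
      _ = ((n.factorial : ℝ) * 4 ^ n / X ^ ((n:ℝ))) * s ^ ((n:ℝ) - α) := by
          rw [← Real.rpow_add hs]; ring_nf
  -- integrability
  have hg_int : ∀ b1 b2 : ℝ, IntervalIntegrable
      (fun s : ℝ => ((n.factorial : ℝ) * 4 ^ n / X ^ ((n:ℝ))) * s ^ ((n:ℝ) - α)) volume b1 b2 :=
    fun b1 b2 => (intervalIntegrable_rpow' (by linarith)).const_mul _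
  have hf_cont : ∀ b : ℝ, ContinuousOn f (Set.Ioc 0 b) := by
    intro b
    apply ContinuousOn.mul
    · exact continuousOn_id.rpow_const (fun s hs => Or.inl (ne_of_gt hs.1))
    · apply Real.continuous_exp.comp_continuousOn
      apply ContinuousOn.div continuousOn_const
        (continuous_const.mul continuous_id).continuousOn
      exact fun s hs => by have := hs.1; exact mul_ne_zero (by norm_num) (ne_of_gt this)
  have hf_int : ∀ b1 b2 : ℝ, 0 ≤ b1 → b1 ≤ b2 → IntervalIntegrable f volume b1 b2 := by
    intro b1 b2 hb1 hb12
    rw [intervalIntegrable_iff_integrableOn_Ioc_of_le hb12]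
    apply MeasureTheory.Integrable.mono ((hg_int b1 b2).1.mono_set
      (Set.Ioc_subset_Ioc le_rfl le_rfl))
      (((hf_cont b2).mono (Set.Ioc_subset_Ioc hb1 le_rfl)).aestronglyMeasurable
        measurableSet_Ioc)
    filter_upwards [MeasureTheory.ae_restrict_mem measurableSet_Ioc] with s hs
    have hs0 : 0 < s := lt_of_le_of_lt hb1 hs.1
    have hf0 : 0 ≤ f s := mul_nonneg (Real.rpow_nonneg hs0.le _) (Real.exp_nonneg _)
    have hg0 : 0 ≤ ((n.factorial : ℝ) * 4 ^ n / X ^ ((n:ℝ))) * s ^ ((n:ℝ) - α) := by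
      have := Real.rpow_pos_of_pos hX ((n:ℝ))
      have := Real.rpow_pos_of_pos hs0 ((n:ℝ) - α)
      positivity
    rw [Real.norm_eq_abs, Real.norm_eq_abs, abs_of_nonneg hf0, abs_of_nonneg hg0]
    exact hbound s hs0
  have hXle : X ≤ 1 - t := hx2.le
  -- LOWER BOUND
  have hlow : Real.exp (-(1/2)) / 2 * xn ^ (2 - 2*α) ≤ ∫ s in (0:ℝ)..(1-t), f s := by
    have hstep1 : ∫ s in (X/2)..X, f s ≤ ∫ s in (0:ℝ)..(1-t), f s := by
      apply integral_mono_interval (by positivity) (by linarith) hXle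
      · filter_upwards [MeasureTheory.ae_restrict_mem measurableSet_Ioc] with s hs
        exact mul_nonneg (Real.rpow_nonneg hs.1.le _) (Real.exp_nonneg _)
      · exact hf_int 0 (1-t) le_rfl hT.le
    have hstep2 : ∫ s in (X/2)..X, (X ^ (-α) * Real.exp (-(1/2)) : ℝ) ≤ ∫ s in (X/2)..X, f s := by
      apply integral_mono_on (by linarith) intervalIntegrable_const
        (hf_int (X/2) X (by positivity) (by linarith))
      intro s hs
      have hs0 : 0 < s := lt_of_lt_of_le (by positivity) hs.1
      have h1 : X ^ (-α) ≤ s ^ (-α) :=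
        Real.rpow_le_rpow_of_nonpos hs0 hs.2 (by linarith)
      have h2 : Real.exp (-(1/2)) ≤ Real.exp (-xn^2 / (4*s)) := by
        apply Real.exp_le_exp.2
        rw [neg_div, neg_le_neg_iff, div_le_iff₀ (by positivity : (0:ℝ) < 4*s)]
        have := hs.1
        rw [hX_def] at this
        linarith
      exact mul_le_mul h1 h2 (Real.exp_nonneg _) (Real.rpow_nonneg hs0.le _)
    have h2 : X * X ^ (-α) = xn ^ (2 - 2*α) := by
      nth_rewrite 1 [← Real.rpow_one X]
      rw [← Real.rpow_add hX, hxr]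
      ring_nf
    have hcalc : ∫ s in (X/2)..X, (X ^ (-α) * Real.exp (-(1/2)) : ℝ)
        = Real.exp (-(1/2)) / 2 * xn ^ (2 - 2*α) := by
      rw [intervalIntegral.integral_const, smul_eq_mul]
      calc (X - X/2) * (X ^ (-α) * Real.exp (-(1/2)))
          = Real.exp (-(1/2)) / 2 * (X * X ^ (-α)) := by ring
        _ = Real.exp (-(1/2)) / 2 * xn ^ (2 - 2*α) := by rw [h2]
    linarith
  have hcinv : c⁻¹ ≤ Real.exp (-(1/2)) / 2 := by
    have h1 : Real.exp (-(1/2)) / 2 = (2 * Real.exp (1/2))⁻¹ := by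
      rw [Real.exp_neg]; field_simp
    rw [h1]
    apply inv_anti₀ h2exp
    linarith
  -- UPPER BOUND
  have hsplit : (∫ s in (0:ℝ)..(1-t), f s)
      = (∫ s in (0:ℝ)..X, f s) + ∫ s in X..(1-t), f s :=
    (integral_add_adjacent_intervals (hf_int 0 X le_rfl hX.le)
      (hf_int X (1-t) hX.le hXle)).symm
  have hup1 : (∫ s in (0:ℝ)..X, f s) ≤ A * xn ^ (2 - 2*α) := by
    have h1 : (∫ s in (0:ℝ)..X, f s) ≤
        ∫ s in (0:ℝ)..X, ((n.factorial : ℝ) * 4 ^ n / X ^ ((n:ℝ))) * s ^ ((n:ℝ) - α) := by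
      apply integral_mono_on hX.le (hf_int 0 X le_rfl hX.le) (hg_int 0 X)
      intro s hs
      rcases eq_or_lt_of_le hs.1 with h | h
      · have hfs : f s = 0 := by
          show s ^ (-α) * Real.exp (-xn ^ 2 / (4 * s)) = 0
          rw [← h, Real.zero_rpow (ne_of_lt (by linarith : -α < 0)), zero_mul]
        rw [hfs]
        have h1 := Real.rpow_pos_of_pos hX ((n:ℝ))
        have h2 := Real.rpow_nonneg h.le ((n:ℝ) - α)
        positivity
      · exact hbound s h
    have h2 : (∫ s in (0:ℝ)..X, ((n.factorial : ℝ) * 4 ^ n / X ^ ((n:ℝ))) * s ^ ((n:ℝ) - α))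
        = A * xn ^ (2 - 2*α) := by
      rw [intervalIntegral.integral_const_mul, integral_rpow (Or.inl (by linarith))]
      rw [Real.zero_rpow (by linarith : (n:ℝ) - α + 1 ≠ 0), sub_zero]
      have e1 : X ^ ((n:ℝ) - α + 1) = X ^ ((n:ℝ)) * xn ^ (2 - 2*α) := by
        rw [hxr, hxr, ← Real.rpow_add hx]
        ring_nf
      rw [e1, hA_def]
      have hXn : (0:ℝ) < X ^ ((n:ℝ)) := Real.rpow_pos_of_pos hX _
      have cancel : ∀ K B y D : ℝ, B ≠ 0 → K / B * (B * y / D) = K / D * y := by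
        intro K B y D hB
        calc K / B * (B * y / D) = (B/B) * (K * y / D) := by ring
          _ = K / D * y := by rw [div_self hB]; ring
      exact cancel _ _ _ _ (ne_of_gt hXn)
    linarith
  have hup2 : (∫ s in X..(1-t), f s) ≤ 1/(α-1) * xn ^ (2 - 2*α) := by
    have hne : (0:ℝ) ∉ Set.uIcc X (1-t) := by
      rw [Set.uIcc_of_le hXle]
      intro h
      exact absurd h.1 (not_le.2 hX)
    have hint2 : IntervalIntegrable (fun s : ℝ => s ^ (-α)) volume X (1-t) :=
      intervalIntegrable_rpow (Or.inr hne)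
    have h1 : (∫ s in X..(1-t), f s) ≤ ∫ s in X..(1-t), s ^ (-α) := by
      apply integral_mono_on hXle (hf_int X (1-t) hX.le hXle) hint2
      intro s hs
      have hs0 : 0 < s := lt_of_lt_of_le hX hs.1
      have : Real.exp (-xn^2 / (4*s)) ≤ 1 := by
        rw [Real.exp_le_one_iff, neg_div]
        simp only [Left.neg_nonpos_iff]
        positivity
      calc f s ≤ s ^ (-α) * 1 :=
            mul_le_mul_of_nonneg_left this (Real.rpow_nonneg hs0.le _)
        _ = s ^ (-α) := mul_one _
    have h2 : (∫ s in X..(1-t), s ^ (-α)) ≤ 1/(α-1) * xn ^ (2 - 2*α) := by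
      rw [integral_rpow (Or.inr ⟨ne_of_lt (by linarith), hne⟩),
        div_le_iff_of_neg (by linarith : -α + 1 < 0)]
      have e1 : X ^ (-α + 1) = xn ^ (2 - 2*α) := by rw [hxr]; congr 1; ring
      have hT1 : (0:ℝ) ≤ (1-t) ^ (-α + 1) := Real.rpow_nonneg hT.le _
      have hx1 : (0:ℝ) < α - 1 := by linarith
      rw [e1]
      have e2 : 1/(α-1) * xn ^ (2-2*α) * (-α+1) = -xn ^ (2-2*α) := by
        field_simp
        ring
      rw [e2]
      linarith
    linarith
  constructor
  · calc c⁻¹ * xn ^ (2 - 2*α) ≤ Real.exp (-(1/2)) / 2 * xn ^ (2 - 2*α) :=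
        mul_le_mul_of_nonneg_right hcinv (hxpos _).le
      _ ≤ _ := hlow
  · calc (∫ s in (0:ℝ)..(1-t), f s) = (∫ s in (0:ℝ)..X, f s) + ∫ s in X..(1-t), f s := hsplit
      _ ≤ A * xn ^ (2 - 2*α) + 1/(α-1) * xn ^ (2 - 2*α) := add_le_add hup1 hup2
      _ ≤ c * xn ^ (2 - 2*α) := by
          rw [hc_def]
          nlinarith [hxpos (2 - 2*α), h2exp]
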